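/- (Lemma 1) Let J_R be any real n×n matrix and let J₂, J₄ be real symmetric n×n matrices such that J₄ is negative semidefinite and there exists κ̄ > 0 with J₂ + κ̄² J₄ negative definite. Then there exists K > 0 such that for every κ ≥ K, every eigenvalue μ of the matrix J_R + κ² J₂ + κ⁴ J₄ satisfies Re(μ) ≤ −κ. In particular, the spectral abscissa of J_R + κ² J₂ + κ⁴ J₄ tends to −∞ as κ → +∞. -/

import Mathlib

open Matrix Polynomial

lemma aux_eigvec {n : ℕ} (M : Matrix (Fin n) (Fin n) ℂ) (μ : ℂ)
    (h : M.charpoly.IsRoot μ) : ∃ v : Fin n → ℂ, v ≠ 0 ∧ M.mulVec v = μ • v := by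
  have hdet : (μ • (1 : Matrix (Fin n) (Fin n) ℂ) - M).det = 0 := by
    have := h
    rw [Polynomial.IsRoot, Matrix.charpoly, ← Polynomial.coe_evalRingHom,
      RingHom.map_det] at this
    rw [← this]
    congr 1
    ext i j
    by_cases hij : i = j <;>
      simp [hij, Matrix.charmatrix_apply, Matrix.one_apply, Matrix.diagonal_apply]
  obtain ⟨v, hv, hv2⟩ := Matrix.exists_mulVec_eq_zero_iff.2 hdet
  refine ⟨v, hv, ?_⟩
  have := hv2
  rw [Matrix.sub_mulVec, Matrix.smul_mulVec, Matrix.one_mulVec, sub_eq_zero] at this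
  exact this.symm

lemma aux_cont {n : ℕ} (M : Matrix (Fin n) (Fin n) ℝ) :
    Continuous (fun x : EuclideanSpace ℝ (Fin n) =>
      (x : Fin n → ℝ) ⬝ᵥ M.mulVec (x : Fin n → ℝ)) := by
  have h : Continuous (fun x : Fin n → ℝ => x ⬝ᵥ M.mulVec x) := by
    have : (fun x : Fin n → ℝ => x ⬝ᵥ M.mulVec x)
        = fun x => ∑ i, x i * ∑ j, M i j * x j := by
      funext x
      simp [dotProduct, Matrix.mulVec]
    rw [this]
    exact continuous_finset_sum _ fun i _ =>
      (continuous_apply i).mul (continuous_finset_sum _ fun j _ =>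
        continuous_const.mul (continuous_apply j))
  exact h.comp (PiLp.continuous_ofLp (p := 2) (β := fun _ : Fin n => ℝ))

lemma aux_sphere {n : ℕ} (M : Matrix (Fin n) (Fin n) ℝ) :
    ∃ C : ℝ, (∀ u : Fin n → ℝ, u ⬝ᵥ u = 1 → u ⬝ᵥ M.mulVec u ≤ C) ∧
      ((∃ u : Fin n → ℝ, u ⬝ᵥ u = 1) → ∃ u : Fin n → ℝ, u ⬝ᵥ u = 1 ∧ u ⬝ᵥ M.mulVec u = C) := by
  have hset : ∀ u : EuclideanSpace ℝ (Fin n),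
      u ∈ Metric.sphere (0 : EuclideanSpace ℝ (Fin n)) 1 ↔ (u : Fin n → ℝ) ⬝ᵥ u = 1 := by
    intro u
    rw [Metric.mem_sphere, dist_zero_right, EuclideanSpace.norm_eq]
    have hd : (u : Fin n → ℝ) ⬝ᵥ u = ∑ i, u i * u i := rfl
    constructor
    · intro h
      have := congrArg (fun t => t ^ 2) h
      simp only [Real.sq_sqrt (by positivity : (0:ℝ) ≤ ∑ i, ‖u i‖ ^ 2)] at this
      rw [hd]
      simpa [Real.norm_eq_abs, sq_abs, sq, one_pow] using this
    · intro h
      have : ∑ i, ‖u i‖ ^ 2 = 1 := by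
        rw [hd] at h; simpa [Real.norm_eq_abs, sq_abs, sq] using h
      rw [this, Real.sqrt_one]
  by_cases hne : (Metric.sphere (0 : EuclideanSpace ℝ (Fin n)) 1).Nonempty
  · obtain ⟨u0, hu0, hmax⟩ := (isCompact_sphere (0 : EuclideanSpace ℝ (Fin n)) 1).exists_isMaxOn
      hne (aux_cont M).continuousOn
    refine ⟨(u0 : Fin n → ℝ) ⬝ᵥ M.mulVec u0, ?_, ?_⟩
    · intro u hu
      exact hmax ((hset (WithLp.toLp 2 u)).2 hu)
    · intro _
      exact ⟨u0, (hset u0).1 hu0, rfl⟩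
  · refine ⟨0, ?_, ?_⟩
    · intro u hu
      exact absurd ⟨WithLp.toLp 2 u, (hset (WithLp.toLp 2 u)).2 hu⟩ hne
    · rintro ⟨u, hu⟩
      exact absurd ⟨WithLp.toLp 2 u, (hset (WithLp.toLp 2 u)).2 hu⟩ hne

lemma aux_scale {n : ℕ} (M : Matrix (Fin n) (Fin n) ℝ) (C : ℝ)
    (h : ∀ u : Fin n → ℝ, u ⬝ᵥ u = 1 → u ⬝ᵥ M.mulVec u ≤ C) :
    ∀ x : Fin n → ℝ, x ⬝ᵥ M.mulVec x ≤ C * (x ⬝ᵥ x) := by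
  intro x
  by_cases hx : x = 0
  · simp [hx]
  · have hpos : 0 < x ⬝ᵥ x := by
      rcases lt_or_eq_of_le ((Finset.sum_nonneg fun i _ => mul_self_nonneg (x i) :
          (0:ℝ) ≤ x ⬝ᵥ x)) with h' | h'
      · exact h'
      · exact absurd (dotProduct_self_eq_zero.1 h'.symm) hx
    set r : ℝ := Real.sqrt (x ⬝ᵥ x) with hr
    have hrpos : 0 < r := Real.sqrt_pos.2 hpos
    have hr2 : r * r = x ⬝ᵥ x := Real.mul_self_sqrt hpos.le
    have hu : (r⁻¹ • x) ⬝ᵥ (r⁻¹ • x) = 1 := by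
      rw [smul_dotProduct, dotProduct_smul]
      field_simp
      rw [smul_eq_mul, smul_eq_mul, ← hr2, one_div, inv_mul_cancel_left₀ hrpos.ne', inv_mul_cancel₀ hrpos.ne']
    have := h (r⁻¹ • x) hu
    have hQ : (r⁻¹ • x) ⬝ᵥ M.mulVec (r⁻¹ • x) = r⁻¹ * r⁻¹ * (x ⬝ᵥ M.mulVec x) := by
      rw [Matrix.mulVec_smul, smul_dotProduct, dotProduct_smul]
      simp [smul_smul, mul_comm]
      ring
    rw [hQ] at this
    have h2 : x ⬝ᵥ M.mulVec x = r * r * (r⁻¹ * r⁻¹ * (x ⬝ᵥ M.mulVec x)) := by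
      field_simp
    rw [h2, ← hr2]
    nlinarith [this, hrpos]

lemma aux_re {n : ℕ} (A : Matrix (Fin n) (Fin n) ℝ) (μ : ℂ) (v : Fin n → ℂ) (hv : v ≠ 0)
    (heig : (A.map (algebraMap ℝ ℂ)).mulVec v = μ • v) :
    ∃ x y : Fin n → ℝ, 0 < x ⬝ᵥ x + y ⬝ᵥ y ∧
      μ.re * (x ⬝ᵥ x + y ⬝ᵥ y) = x ⬝ᵥ A.mulVec x + y ⬝ᵥ A.mulVec y := by
  set x : Fin n → ℝ := fun i => (v i).re with hx
  set y : Fin n → ℝ := fun i => (v i).im with hy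
  refine ⟨x, y, ?_, ?_⟩
  · obtain ⟨i0, hi0⟩ := Function.ne_iff.1 hv
    have h1 : 0 < x i0 * x i0 + y i0 * y i0 := by
      have := Complex.normSq_pos.2 hi0
      rwa [Complex.normSq_apply] at this
    have h2 : x i0 * x i0 ≤ x ⬝ᵥ x :=
      Finset.single_le_sum (fun i _ => mul_self_nonneg (x i)) (Finset.mem_univ i0)
    have h3 : y i0 * y i0 ≤ y ⬝ᵥ y :=
      Finset.single_le_sum (fun i _ => mul_self_nonneg (y i)) (Finset.mem_univ i0)
    linarith
  · have hsv : star v ⬝ᵥ v = ((x ⬝ᵥ x + y ⬝ᵥ y : ℝ) : ℂ) := by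
      simp only [dotProduct, Pi.star_apply]
      rw [Complex.ofReal_add]
      push_cast
      rw [← Finset.sum_add_distrib]
      refine Finset.sum_congr rfl fun i _ => ?_
      apply Complex.ext <;>
        simp [Complex.mul_re, Complex.mul_im, hx, hy] <;> ring
    have h1 : star v ⬝ᵥ ((A.map (algebraMap ℝ ℂ)).mulVec v) = μ * (star v ⬝ᵥ v) := by
      rw [heig, dotProduct_smul, smul_eq_mul]
    have hlhs : (star v ⬝ᵥ ((A.map (algebraMap ℝ ℂ)).mulVec v)).re
        = x ⬝ᵥ A.mulVec x + y ⬝ᵥ A.mulVec y := by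
      have e1 : star v ⬝ᵥ ((A.map (algebraMap ℝ ℂ)).mulVec v)
          = ∑ i, ∑ j, (starRingEnd ℂ) (v i) * (((A i j : ℝ) : ℂ) * v j) := by
        simp only [dotProduct, Matrix.mulVec, Pi.star_apply, Matrix.map_apply,
          RCLike.star_def, Finset.mul_sum]
        rfl
      have e2 : x ⬝ᵥ A.mulVec x + y ⬝ᵥ A.mulVec y
          = ∑ i, ∑ j, A i j * (x i * x j + y i * y j) := by
        simp only [dotProduct, Matrix.mulVec, Finset.mul_sum,
          ← Finset.sum_add_distrib]
        refine Finset.sum_congr rfl fun i _ => ?_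
        exact Finset.sum_congr rfl fun j _ => by ring
      rw [e1, e2, Complex.re_sum]
      refine Finset.sum_congr rfl fun i _ => ?_
      rw [Complex.re_sum]
      refine Finset.sum_congr rfl fun j _ => ?_
      simp [Complex.mul_re, Complex.mul_im, hx, hy]
      ring
    have := congrArg Complex.re h1
    rw [hlhs, hsv] at this
    rw [this]
    simp [Complex.mul_re]

/-- (Lemma 1) Let `J_R` be any real `n × n` matrix and `J₂, J₄` real symmetric `n × n`
matrices with `J₄` negative semidefinite, and suppose there is `κ̄ > 0` such that
`J₂ + κ̄² J₄` is negative definite.  Then there exists `K > 0` such that for every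
`κ ≥ K` every eigenvalue `μ` of `J_R + κ² J₂ + κ⁴ J₄` satisfies `Re μ ≤ -κ`
(so the spectral abscissa tends to `-∞` as `κ → +∞`). -/
theorem stmt3 (n : ℕ) (JR J2 J4 : Matrix (Fin n) (Fin n) ℝ)
    (hJ2 : J2.IsSymm) (hJ4 : J4.IsSymm)
    (hJ4nsd : ∀ x : Fin n → ℝ, x ⬝ᵥ J4.mulVec x ≤ 0)
    (hκbar : ∃ κbar : ℝ, 0 < κbar ∧
      ∀ x : Fin n → ℝ, x ≠ 0 → x ⬝ᵥ (J2 + κbar ^ 2 • J4).mulVec x < 0) :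
    ∃ K : ℝ, 0 < K ∧ ∀ κ : ℝ, K ≤ κ → ∀ μ : ℂ,
      (((JR + κ ^ 2 • J2 + κ ^ 4 • J4).charpoly).map (algebraMap ℝ ℂ)).IsRoot μ →
        μ.re ≤ -κ := by
  obtain ⟨κb, hκb, hneg⟩ := hκbar
  rcases Nat.eq_zero_or_pos n with hn | hn
  · -- n = 0 : no eigenvalues at all
    subst hn
    refine ⟨1, one_pos, ?_⟩
    intro κ hκ μ hroot
    exfalso
    have h1 : (JR + κ ^ 2 • J2 + κ ^ 4 • J4).charpoly = 1 := by
      rw [Matrix.charpoly]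
      exact Matrix.det_isEmpty
    rw [h1] at hroot
    simp [Polynomial.IsRoot] at hroot
  · -- n ≥ 1
    obtain ⟨C2, hC2a, hC2b⟩ := aux_sphere (J2 + κb ^ 2 • J4)
    have hunit : ∃ u : Fin n → ℝ, u ⬝ᵥ u = 1 := by
      refine ⟨Pi.single ⟨0, hn⟩ 1, ?_⟩
      rw [dotProduct_single]
      simp
    obtain ⟨u0, hu01, hu0C⟩ := hC2b hunit
    have hu0ne : u0 ≠ 0 := by
      intro h
      rw [h] at hu01
      simp [dotProduct] at hu01
    have hC2neg : C2 < 0 := hu0C ▸ hneg u0 hu0ne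
    set δ : ℝ := -C2 with hδdef
    have hδ : 0 < δ := by simp [hδdef]; linarith
    have hB : ∀ z : Fin n → ℝ, z ⬝ᵥ (J2 + κb ^ 2 • J4).mulVec z ≤ C2 * (z ⬝ᵥ z) :=
      aux_scale _ _ hC2a
    obtain ⟨C1, hC1a, -⟩ := aux_sphere JR
    have hJRb : ∀ z : Fin n → ℝ, z ⬝ᵥ JR.mulVec z ≤ C1 * (z ⬝ᵥ z) :=
      aux_scale _ _ hC1a
    refine ⟨max κb (max 1 ((|C1| + 1) / δ)), lt_of_lt_of_le one_pos
      (le_trans (le_max_left _ _) (le_max_right _ _)), ?_⟩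
    intro κ hκ μ hroot
    have hκb' : κb ≤ κ := le_trans (le_max_left _ _) hκ
    have hκ1 : 1 ≤ κ := le_trans (le_trans (le_max_left _ _) (le_max_right _ _)) hκ
    have hκδ : |C1| + 1 ≤ δ * κ := by
      have : (|C1| + 1) / δ ≤ κ := le_trans (le_trans (le_max_right _ _) (le_max_right _ _)) hκ
      rw [div_le_iff₀ hδ] at this
      linarith [this]
    set A := JR + κ ^ 2 • J2 + κ ^ 4 • J4 with hA
    rw [← Matrix.charpoly_map] at hroot
    obtain ⟨v, hv, heig⟩ := aux_eigvec _ _ hroot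
    obtain ⟨x, y, hs, hkey⟩ := aux_re A μ v hv heig
    -- quadratic form bound for A
    have hbound : ∀ z : Fin n → ℝ, z ⬝ᵥ A.mulVec z ≤ (C1 - δ * κ ^ 2) * (z ⬝ᵥ z) := by
      intro z
      have hzz : (0:ℝ) ≤ z ⬝ᵥ z := Finset.sum_nonneg fun i _ => mul_self_nonneg (z i)
      have hsplit : z ⬝ᵥ A.mulVec z
          = z ⬝ᵥ JR.mulVec z + κ ^ 2 * (z ⬝ᵥ J2.mulVec z) + κ ^ 4 * (z ⬝ᵥ J4.mulVec z) := by
        rw [hA, Matrix.add_mulVec, Matrix.add_mulVec, Matrix.smul_mulVec,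
          Matrix.smul_mulVec, dotProduct_add, dotProduct_add,
          dotProduct_smul, dotProduct_smul, smul_eq_mul, smul_eq_mul]
      have hBsplit : z ⬝ᵥ (J2 + κb ^ 2 • J4).mulVec z
          = z ⬝ᵥ J2.mulVec z + κb ^ 2 * (z ⬝ᵥ J4.mulVec z) := by
        rw [Matrix.add_mulVec, Matrix.smul_mulVec, dotProduct_add,
          dotProduct_smul, smul_eq_mul]
      have hBz := hB z
      rw [hBsplit] at hBz
      have h4 : z ⬝ᵥ J4.mulVec z ≤ 0 := hJ4nsd z
      have hκ2 : κb ^ 2 ≤ κ ^ 2 := by nlinarith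
      have step1 : κ ^ 2 * (z ⬝ᵥ J4.mulVec z) ≤ κb ^ 2 * (z ⬝ᵥ J4.mulVec z) := by
        nlinarith
      have step2 : z ⬝ᵥ J2.mulVec z + κ ^ 2 * (z ⬝ᵥ J4.mulVec z) ≤ C2 * (z ⬝ᵥ z) := by
        linarith
      have hκ2nn : (0:ℝ) ≤ κ ^ 2 := sq_nonneg κ
      have step3 : κ ^ 2 * (z ⬝ᵥ J2.mulVec z + κ ^ 2 * (z ⬝ᵥ J4.mulVec z))
          ≤ κ ^ 2 * (C2 * (z ⬝ᵥ z)) := mul_le_mul_of_nonneg_left step2 hκ2nn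
      have hJRz := hJRb z
      have hexp : κ ^ 2 * (z ⬝ᵥ J2.mulVec z + κ ^ 2 * (z ⬝ᵥ J4.mulVec z))
          = κ ^ 2 * (z ⬝ᵥ J2.mulVec z) + κ ^ 4 * (z ⬝ᵥ J4.mulVec z) := by ring
      rw [hsplit, hδdef]
      have e : (C1 - -C2 * κ ^ 2) * (z ⬝ᵥ z)
          = C1 * (z ⬝ᵥ z) + κ ^ 2 * (C2 * (z ⬝ᵥ z)) := by ring
      linarith [step3, hJRz, hexp]
    have hxb := hbound x
    have hyb := hbound y
    have hre : μ.re * (x ⬝ᵥ x + y ⬝ᵥ y) ≤ (C1 - δ * κ ^ 2) * (x ⬝ᵥ x + y ⬝ᵥ y) := by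
      rw [hkey]
      nlinarith [hxb, hyb]
    have hre2 : μ.re ≤ C1 - δ * κ ^ 2 := by
      have := (mul_le_mul_iff_left₀ hs).1 hre
      exact this
    have hfin : C1 - δ * κ ^ 2 ≤ -κ := by
      have habs : C1 ≤ |C1| := le_abs_self C1
      nlinarith [mul_le_mul_of_nonneg_right hκδ (by linarith : (0:ℝ) ≤ κ),
        mul_le_mul_of_nonneg_left hκ1 (abs_nonneg C1), habs, hκ1, abs_nonneg C1]
    linarith
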